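/- Let g : [0, T] → [0, ∞) be continuous and C ≥ 0, and suppose ∫_0^T e^{−2pt} g(t) dt ≤ C ∫_0^T e^{−2pt} dt for all p ≥ p₀ (some p₀ > 0). Then g(0) ≤ C. -/

import Mathlib

open intervalIntegral in
/-- Integral of `exp (-2 p t)` over `[0, b]`. -/
lemma exp_integral_aux (p b : ℝ) (hp : 0 < p) :
    (∫ t in (0:ℝ)..b, Real.exp (-2 * p * t)) =
      (1 - Real.exp (-2 * p * b)) / (2 * p) := by
  have hc : (-2 * p) ≠ 0 := by nlinarith
  have := integral_comp_mul_left (a := 0) (b := b) (c := -2*p)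
    (f := fun x => Real.exp x) hc
  simp only [mul_zero, integral_exp, Real.exp_zero] at this
  rw [this]
  field_simp
  rw [smul_eq_mul, one_div, neg_mul, mul_neg, ← mul_assoc, mul_inv_cancel₀ (by positivity : (2 * p) ≠ 0)]
  ring

set_option maxHeartbeats 1000000 in
theorem laplace_localization (T : ℝ) (hT : 0 < T) (g : ℝ → ℝ)
    (hcont : ContinuousOn g (Set.Icc 0 T))
    (hnonneg : ∀ t ∈ Set.Icc (0:ℝ) T, 0 ≤ g t)
    (C p₀ : ℝ) (hC : 0 ≤ C) (hp₀ : 0 < p₀)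
    (h : ∀ p : ℝ, p₀ ≤ p →
      (∫ t in (0:ℝ)..T, Real.exp (-2 * p * t) * g t) ≤
        C * ∫ t in (0:ℝ)..T, Real.exp (-2 * p * t)) :
    g 0 ≤ C := by
  by_contra h'
  push_neg at h'
  set m : ℝ := (g 0 + C) / 2 with hm
  have hCm : C < m := by rw [hm]; linarith
  have hmg : m < g 0 := by rw [hm]; linarith
  have hm0 : 0 < m := lt_of_le_of_lt hC hCm
  -- continuity at 0 gives a small interval where g ≥ m
  have h0mem : (0:ℝ) ∈ Set.Icc 0 T := ⟨le_rfl, hT.le⟩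
  have hcw : ContinuousWithinAt g (Set.Icc 0 T) 0 := hcont 0 h0mem
  have hball : {t | g t ∈ Set.Ioi m} ∈ nhdsWithin 0 (Set.Icc 0 T) :=
    hcw (Ioi_mem_nhds hmg)
  obtain ⟨δ, hδ, hδball⟩ := Metric.mem_nhdsWithin_iff.mp hball
  set η : ℝ := min (δ / 2) T with hη
  have hη0 : 0 < η := lt_min (by linarith) hT
  have hηT : η ≤ T := min_le_right _ _
  have hglow : ∀ t ∈ Set.Icc (0:ℝ) η, m ≤ g t := by
    intro t ht
    have ht0 : 0 ≤ t := ht.1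
    have htT : t ≤ T := le_trans ht.2 hηT
    have hd : t ∈ Metric.ball (0:ℝ) δ := by
      rw [Metric.mem_ball, Real.dist_eq, sub_zero, abs_of_nonneg ht0]
      exact lt_of_le_of_lt (le_trans ht.2 (min_le_left _ _)) (by linarith)
    exact le_of_lt (hδball ⟨hd, ht0, htT⟩)
  -- choose p large
  set ε : ℝ := (m - C) / (2 * m) with hε
  have hε0 : 0 < ε := div_pos (by linarith) (by linarith)
  set p : ℝ := max p₀ (Real.log ε / (-2 * η) + 1) with hp
  have hpp₀ : p₀ ≤ p := le_max_left _ _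
  have hp0 : 0 < p := lt_of_lt_of_le hp₀ hpp₀
  have hexp_small : Real.exp (-2 * p * η) < ε := by
    rw [← Real.exp_log hε0, Real.exp_lt_exp]
    have h1 : Real.log ε / (-2 * η) ≤ p - 1 := by
      have := le_max_right p₀ (Real.log ε / (-2 * η) + 1)
      linarith [hp ▸ this]
    have h2η : (-2 * η) < 0 := by linarith
    have h2 : (p - 1) * (-2 * η) ≤ Real.log ε := (div_le_iff_of_neg h2η).mp h1
    nlinarith
  -- integrability
  have hconte : Continuous fun t => Real.exp (-2 * p * t) := by continuity
  have hint1 : IntervalIntegrable (fun t => Real.exp (-2 * p * t) * g t)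
      MeasureTheory.volume 0 T := by
    apply ContinuousOn.intervalIntegrable
    rw [Set.uIcc_of_le hT.le]
    exact hconte.continuousOn.mul hcont
  -- lower bound : m * ∫_0^η exp ≤ ∫_0^η exp * g ≤ ∫_0^T exp * g
  have key1 : (∫ t in (0:ℝ)..η, Real.exp (-2 * p * t) * m) ≤
      ∫ t in (0:ℝ)..η, Real.exp (-2 * p * t) * g t := by
    apply intervalIntegral.integral_mono_on hη0.le
    · exact ((hconte.mul continuous_const).continuousOn).intervalIntegrable
    · apply ContinuousOn.intervalIntegrable
      rw [Set.uIcc_of_le hη0.le]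
      exact hconte.continuousOn.mul (hcont.mono (Set.Icc_subset_Icc le_rfl hηT))
    · intro t ht
      exact mul_le_mul_of_nonneg_left (hglow t ht) (Real.exp_nonneg _)
  have key2 : (∫ t in (0:ℝ)..η, Real.exp (-2 * p * t) * g t) ≤
      ∫ t in (0:ℝ)..T, Real.exp (-2 * p * t) * g t := by
    apply intervalIntegral.integral_mono_interval le_rfl hη0.le hηT _ hint1
    filter_upwards [MeasureTheory.ae_restrict_mem measurableSet_Ioc] with t ht
    exact mul_nonneg (Real.exp_nonneg _) (hnonneg t ⟨ht.1.le, ht.2⟩)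
  have hIη : (∫ t in (0:ℝ)..η, Real.exp (-2 * p * t) * m) =
      m * (1 - Real.exp (-2 * p * η)) / (2 * p) := by
    rw [intervalIntegral.integral_mul_const, exp_integral_aux p η hp0]
    ring
  have hIT : (∫ t in (0:ℝ)..T, Real.exp (-2 * p * t)) =
      (1 - Real.exp (-2 * p * T)) / (2 * p) := exp_integral_aux p T hp0
  have hmain := h p hpp₀
  rw [hIT] at hmain
  rw [hIη] at key1
  have hexpT : 0 < Real.exp (-2 * p * T) := Real.exp_pos _
  have h2p : (0:ℝ) < 2 * p := by linarith
  have h2p' : (2 * p) ≠ 0 := ne_of_gt h2p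
  have chain : m * (1 - Real.exp (-2 * p * η)) / (2 * p) ≤
      C * (1 - Real.exp (-2 * p * T)) / (2 * p) := by
    calc m * (1 - Real.exp (-2 * p * η)) / (2 * p)
        ≤ ∫ t in (0:ℝ)..T, Real.exp (-2 * p * t) * g t := le_trans key1 key2
      _ ≤ C * ((1 - Real.exp (-2 * p * T)) / (2 * p)) := hmain
      _ = C * (1 - Real.exp (-2 * p * T)) / (2 * p) := by ring
  have chain2 : m * (1 - Real.exp (-2 * p * η)) ≤
      C * (1 - Real.exp (-2 * p * T)) := by
    have := mul_le_mul_of_nonneg_right chain h2p.le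
    rwa [div_mul_cancel₀ _ h2p', div_mul_cancel₀ _ h2p'] at this
  have chain3 : m * (1 - Real.exp (-2 * p * η)) ≤ C := by
    have : C * (1 - Real.exp (-2 * p * T)) ≤ C := by nlinarith
    linarith
  -- but m * (1 - exp) > C since exp < ε
  have hme : m * Real.exp (-2 * p * η) < m * ε :=
    mul_lt_mul_of_pos_left hexp_small hm0
  have hmε : m * ε = (m - C) / 2 := by
    rw [hε, mul_div_assoc', mul_comm 2 m, mul_div_mul_left _ _ (ne_of_gt hm0)]
  nlinarith
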